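/- arXiv:2507.19447 — 4 statements merged into one kernel-verified Lean document; each statement's English description precedes it below -/
import Mathlib

section
/- In the algebra H_c the following identities hold: g·k = k·g; h·k = −k·h; [k, x] = −x (equivalently k·x = x·(k − 1)); and [k, y] = y (equivalently k·y = y·(k + 1)). -/
noncomputable section

open Polynomial

/-- The primitive `n`-th root of unity `ε = exp(2πi/n)`. -/
def eps (n : ℕ) : ℂ := Complex.exp (2 * Real.pi * Complex.I / n)

/-- The constants `α_q = (1/c_0) Σ_{i=1}^{n-1} c_i ε^{-iq}/(ε^i − 1)`. -/
def alphaOf (n : ℕ) (c : ℤ → ℂ) (q : ℤ) : ℂ :=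
  (c 0)⁻¹ * ∑ i ∈ Finset.Ico 1 n, c (i : ℤ) * eps n ^ (-(i : ℤ) * q) / (eps n ^ (i : ℕ) - 1)

/-- The algebra `H_c = (ℂ[x,y] # 𝔻_n)/(xy − yx − c)` for the dicyclic group `𝔻_n`,
presented by its generators, relations, and PBW basis. -/
structure HcSetup (n : ℕ) where
  hn : 0 < n
  heven : Even n
  H : Type
  [ring : Ring H]
  [alg : Algebra ℂ H]
  x : H
  y : H
  g : H
  h : H
  c : ℤ → ℂ
  c_per : ∀ i : ℤ, c (i + n) = c i
  c_symm : ∀ i : ℤ, c (-i) = c i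
  c0_ne : c 0 ≠ 0
  rel_gx : g * x = eps n • (x * g)
  rel_gy : g * y = (eps n)⁻¹ • (y * g)
  rel_hx : h * x = y * h
  rel_hy : h * y = -(x * h)
  rel_comm : x * y - y * x = ∑ i ∈ Finset.range n, c (i : ℤ) • g ^ i
  rel_gn : g ^ n = 1
  rel_h2 : h ^ 2 = g ^ (n / 2)
  rel_hg : h * g = g ^ (n - 1) * h
  basis : Module.Basis (ℕ × ℕ × Fin n × Fin 2) ℂ H
  basis_eq : ∀ p : ℕ × ℕ × Fin n × Fin 2,
    basis p = x ^ p.1 * y ^ p.2.1 * g ^ (p.2.2.1 : ℕ) * h ^ (p.2.2.2 : ℕ)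

attribute [instance] HcSetup.ring HcSetup.alg

namespace HcSetup

variable {n : ℕ}

/-- `k = (1/c_0)(xy + Σ_{i=1}^{n-1} c_i g^i/(ε^i − 1)) − 1/2`. -/
def k (S : HcSetup n) : S.H :=
  (S.c 0)⁻¹ • (S.x * S.y + ∑ i ∈ Finset.Ico 1 n, (S.c (i : ℤ) / (eps n ^ (i : ℕ) - 1)) • S.g ^ i)
    - (2 : ℂ)⁻¹ • (1 : S.H)

/-- `e_q = (1/n) Σ_{i=0}^{n-1} ε^{iq} g^i`. -/
def e (S : HcSetup n) (q : ℤ) : S.H :=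
  (n : ℂ)⁻¹ • ∑ i ∈ Finset.range n, eps n ^ ((i : ℤ) * q) • S.g ^ i

/-- `α_q = (1/c_0) Σ_{i=1}^{n-1} c_i ε^{-iq}/(ε^i − 1)`. -/
def αc (S : HcSetup n) (q : ℤ) : ℂ := alphaOf n S.c q

end HcSetup


namespace HcSetup

variable {n : ℕ} (S : HcSetup n)

lemma eps_prim (hn : 0 < n) : IsPrimitiveRoot (eps n) n :=
  Complex.isPrimitiveRoot_exp n hn.ne'

lemma g_pow_mul_x : ∀ i : ℕ, S.g ^ i * S.x = eps n ^ i • (S.x * S.g ^ i)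
  | 0 => by simp
  | (i+1) => by
      calc S.g ^ (i+1) * S.x = S.g ^ i * (S.g * S.x) := by rw [pow_succ, mul_assoc]
        _ = eps n • (S.g ^ i * S.x * S.g) := by rw [S.rel_gx, mul_smul_comm, mul_assoc]
        _ = eps n • ((eps n ^ i • (S.x * S.g ^ i)) * S.g) := by rw [g_pow_mul_x i]
        _ = eps n ^ (i+1) • (S.x * S.g ^ (i+1)) := by
            rw [smul_mul_assoc, smul_smul, mul_assoc, ← pow_succ, ← pow_succ']

lemma g_pow_mul_y : ∀ i : ℕ, S.g ^ i * S.y = (eps n ^ i)⁻¹ • (S.y * S.g ^ i)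
  | 0 => by simp
  | (i+1) => by
      calc S.g ^ (i+1) * S.y = S.g ^ i * (S.g * S.y) := by rw [pow_succ, mul_assoc]
        _ = (eps n)⁻¹ • (S.g ^ i * S.y * S.g) := by rw [S.rel_gy, mul_smul_comm, mul_assoc]
        _ = (eps n)⁻¹ • (((eps n ^ i)⁻¹ • (S.y * S.g ^ i)) * S.g) := by rw [g_pow_mul_y i]
        _ = (eps n ^ (i+1))⁻¹ • (S.y * S.g ^ (i+1)) := by
            rw [smul_mul_assoc, smul_smul, mul_assoc, ← pow_succ, ← mul_inv, ← pow_succ']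

lemma h_mul_g_pow : ∀ i : ℕ, i ≤ n → S.h * S.g ^ i = S.g ^ (n - i) * S.h
  | 0, _ => by simp [S.rel_gn]
  | (i+1), hi => by
      have hii : i ≤ n := by omega
      calc S.h * S.g ^ (i+1) = (S.h * S.g ^ i) * S.g := by rw [pow_succ, mul_assoc]
        _ = S.g ^ (n - i) * (S.h * S.g) := by rw [h_mul_g_pow i hii, mul_assoc]
        _ = S.g ^ (n - i) * (S.g ^ (n-1) * S.h) := by rw [S.rel_hg]
        _ = S.g ^ (n - i + (n-1)) * S.h := by rw [← mul_assoc, ← pow_add]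
        _ = S.g ^ (n - (i+1)) * S.h := by
            have h2 : n - i + (n - 1) = (n - (i+1)) + n := by omega
            rw [h2, pow_add, S.rel_gn, mul_one]

lemma aux_field {c u : ℂ} (h0 : u ≠ 0) (h1 : u ≠ 1) :
    c / (u⁻¹ - 1) + c / (u - 1) = -c := by
  have hd2 : u - 1 ≠ 0 := sub_ne_zero.mpr h1
  have hd1 : (1:ℂ) - u ≠ 0 := sub_ne_zero.mpr (Ne.symm h1)
  have h2 : u⁻¹ - 1 = (1 - u) / u := by field_simp
  rw [h2, div_div_eq_mul_div, div_add_div _ _ hd1 hd2, div_eq_iff (mul_ne_zero hd1 hd2)]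
  ring

lemma g_mul_k : S.g * S.k = S.k * S.g := by
  have hu0 : eps n ≠ 0 := Complex.exp_ne_zero _
  simp only [k]
  set A := ∑ i ∈ Finset.Ico 1 n, (S.c (i : ℤ) / (eps n ^ (i : ℕ) - 1)) • S.g ^ i with hA
  have hxy : S.g * (S.x * S.y) = S.x * S.y * S.g := by
    calc S.g * (S.x * S.y) = (S.g * S.x) * S.y := by rw [mul_assoc]
      _ = eps n • (S.x * (S.g * S.y)) := by rw [S.rel_gx, smul_mul_assoc, mul_assoc]
      _ = (eps n * (eps n)⁻¹) • (S.x * S.y * S.g) := by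
          rw [S.rel_gy, mul_smul_comm, smul_smul, mul_assoc]
      _ = S.x * S.y * S.g := by rw [mul_inv_cancel₀ hu0, one_smul]
  have hgA : S.g * A = A * S.g := by
    rw [hA, Finset.mul_sum, Finset.sum_mul]
    refine Finset.sum_congr rfl fun i _ => ?_
    rw [mul_smul_comm, smul_mul_assoc, ← pow_succ, ← pow_succ']
  simp only [mul_sub, sub_mul, mul_smul_comm, smul_mul_assoc, mul_add, add_mul,
    one_mul, mul_one, hxy, hgA]

lemma k_mul_x : S.k * S.x - S.x * S.k = -S.x := by
  have hn := S.hn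
  have prim : IsPrimitiveRoot (eps n) n := eps_prim hn
  simp only [k]
  set A := ∑ i ∈ Finset.Ico 1 n, (S.c (i : ℤ) / (eps n ^ (i : ℕ) - 1)) • S.g ^ i with hA
  have hAx : A * S.x - S.x * A = ∑ i ∈ Finset.Ico 1 n, S.c (i:ℤ) • (S.x * S.g ^ i) := by
    rw [hA, Finset.sum_mul, Finset.mul_sum, ← Finset.sum_sub_distrib]
    refine Finset.sum_congr rfl fun i hi => ?_
    rw [Finset.mem_Ico] at hi
    rw [smul_mul_assoc, g_pow_mul_x, mul_smul_comm, smul_smul, ← sub_smul]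
    congr 1
    have h1 : eps n ^ i - 1 ≠ 0 :=
      sub_ne_zero.mpr (prim.pow_ne_one_of_pos_of_lt (by omega) hi.2)
    field_simp
  have hxyx : (S.x * S.y) * S.x - S.x * (S.x * S.y)
      = -(S.c 0 • S.x) - ∑ i ∈ Finset.Ico 1 n, S.c (i:ℤ) • (S.x * S.g ^ i) := by
    have h2 : (S.x * S.y) * S.x - S.x * (S.x * S.y) = -(S.x * (S.x * S.y - S.y * S.x)) := by
      noncomm_ring
    rw [h2, S.rel_comm, Finset.mul_sum, Finset.range_eq_Ico,
      Finset.sum_eq_sum_Ico_succ_bot hn]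
    simp only [mul_smul_comm, pow_zero, mul_one, Nat.cast_zero, zero_add]
    abel
  have hsum : (S.x * S.y + A) * S.x - S.x * (S.x * S.y + A) = -(S.c 0 • S.x) := by
    have h3 : (S.x * S.y + A) * S.x - S.x * (S.x * S.y + A)
        = ((S.x * S.y) * S.x - S.x * (S.x * S.y)) + (A * S.x - S.x * A) := by
      rw [add_mul, mul_add]; abel
    rw [h3, hAx, hxyx]; abel
  calc ((S.c 0)⁻¹ • (S.x * S.y + A) - (2:ℂ)⁻¹ • 1) * S.x
        - S.x * ((S.c 0)⁻¹ • (S.x * S.y + A) - (2:ℂ)⁻¹ • 1)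
      = (S.c 0)⁻¹ • ((S.x * S.y + A) * S.x - S.x * (S.x * S.y + A)) := by
        simp only [sub_mul, mul_sub, smul_mul_assoc, mul_smul_comm, one_mul, mul_one, smul_sub]
        abel
    _ = (S.c 0)⁻¹ • (-(S.c 0 • S.x)) := by rw [hsum]
    _ = -S.x := by rw [smul_neg, smul_smul, inv_mul_cancel₀ S.c0_ne, one_smul]

lemma k_mul_y : S.k * S.y - S.y * S.k = S.y := by
  have hn := S.hn
  have prim : IsPrimitiveRoot (eps n) n := eps_prim hn
  have hu0 : eps n ≠ 0 := Complex.exp_ne_zero _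
  simp only [k]
  set A := ∑ i ∈ Finset.Ico 1 n, (S.c (i : ℤ) / (eps n ^ (i : ℕ) - 1)) • S.g ^ i with hA
  have hAy : A * S.y - S.y * A
      = -∑ i ∈ Finset.Ico 1 n, (S.c (i:ℤ) * (eps n ^ i)⁻¹) • (S.y * S.g ^ i) := by
    rw [hA, Finset.sum_mul, Finset.mul_sum, ← Finset.sum_neg_distrib, ← Finset.sum_sub_distrib]
    refine Finset.sum_congr rfl fun i hi => ?_
    rw [Finset.mem_Ico] at hi
    rw [smul_mul_assoc, g_pow_mul_y, mul_smul_comm, smul_smul, ← sub_smul, ← neg_smul]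
    congr 1
    have h1 : eps n ^ i - 1 ≠ 0 :=
      sub_ne_zero.mpr (prim.pow_ne_one_of_pos_of_lt (by omega) hi.2)
    have h0 : eps n ^ i ≠ 0 := pow_ne_zero _ hu0
    field_simp
    ring
  have hxyy : (S.x * S.y) * S.y - S.y * (S.x * S.y)
      = S.c 0 • S.y + ∑ i ∈ Finset.Ico 1 n, (S.c (i:ℤ) * (eps n ^ i)⁻¹) • (S.y * S.g ^ i) := by
    have h2 : (S.x * S.y) * S.y - S.y * (S.x * S.y) = (S.x * S.y - S.y * S.x) * S.y := by
      noncomm_ring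
    rw [h2, S.rel_comm, Finset.sum_mul, Finset.range_eq_Ico,
      Finset.sum_eq_sum_Ico_succ_bot hn]
    simp only [smul_mul_assoc, pow_zero, one_mul, Nat.cast_zero, zero_add]
    congr 1
    refine Finset.sum_congr rfl fun i hi => ?_
    rw [g_pow_mul_y, smul_smul]
  have hsum : (S.x * S.y + A) * S.y - S.y * (S.x * S.y + A) = S.c 0 • S.y := by
    have h3 : (S.x * S.y + A) * S.y - S.y * (S.x * S.y + A)
        = ((S.x * S.y) * S.y - S.y * (S.x * S.y)) + (A * S.y - S.y * A) := by
      rw [add_mul, mul_add]; abel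
    rw [h3, hAy, hxyy]; abel
  calc ((S.c 0)⁻¹ • (S.x * S.y + A) - (2:ℂ)⁻¹ • 1) * S.y
        - S.y * ((S.c 0)⁻¹ • (S.x * S.y + A) - (2:ℂ)⁻¹ • 1)
      = (S.c 0)⁻¹ • ((S.x * S.y + A) * S.y - S.y * (S.x * S.y + A)) := by
        simp only [sub_mul, mul_sub, smul_mul_assoc, mul_smul_comm, one_mul, mul_one, smul_sub]
        abel
    _ = (S.c 0)⁻¹ • (S.c 0 • S.y) := by rw [hsum]
    _ = S.y := by rw [smul_smul, inv_mul_cancel₀ S.c0_ne, one_smul]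

lemma h_mul_k : S.h * S.k = -(S.k * S.h) := by
  have hn := S.hn
  have prim : IsPrimitiveRoot (eps n) n := eps_prim hn
  have hu0 : eps n ≠ 0 := Complex.exp_ne_zero _
  simp only [k]
  set A := ∑ i ∈ Finset.Ico 1 n, (S.c (i : ℤ) / (eps n ^ (i : ℕ) - 1)) • S.g ^ i with hA
  have hhxy : S.h * (S.x * S.y) = -((S.y * S.x) * S.h) := by
    calc S.h * (S.x * S.y) = (S.h * S.x) * S.y := by rw [mul_assoc]
      _ = S.y * (S.h * S.y) := by rw [S.rel_hx, mul_assoc]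
      _ = -((S.y * S.x) * S.h) := by rw [S.rel_hy, mul_neg, mul_assoc]
  have hAh : A * S.h = ∑ i ∈ Finset.Ico 1 n,
      (S.c (i:ℤ) / (eps n ^ i - 1)) • (S.g ^ i * S.h) := by
    rw [hA, Finset.sum_mul]
    exact Finset.sum_congr rfl fun i _ => by rw [smul_mul_assoc]
  have hhA1 : S.h * A = ∑ i ∈ Finset.Ico 1 n,
      (S.c (i:ℤ) / ((eps n ^ i)⁻¹ - 1)) • (S.g ^ i * S.h) := by
    rw [hA, Finset.mul_sum]
    refine Finset.sum_nbij' (fun i => n - i) (fun i => n - i) ?_ ?_ ?_ ?_ ?_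
    · intro i hi; simp only [Finset.mem_Ico] at hi ⊢; omega
    · intro i hi; simp only [Finset.mem_Ico] at hi ⊢; omega
    · intro i hi; simp only [Finset.mem_Ico] at hi; show n - (n - i) = i; omega
    · intro i hi; simp only [Finset.mem_Ico] at hi; show n - (n - i) = i; omega
    · intro i hi
      rw [Finset.mem_Ico] at hi
      have hiln : i ≤ n := by omega
      rw [mul_smul_comm, h_mul_g_pow S i hiln]
      have hc : S.c ((↑(n - i) : ℤ)) = S.c (i:ℤ) := by
        have hcast : ((n - i : ℕ) : ℤ) = -(i:ℤ) + (n:ℤ) := by push_cast [hiln]; ring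
        rw [hcast, S.c_per, S.c_symm]
      have he : eps n ^ (n - i) * eps n ^ i = 1 := by
        rw [← pow_add, Nat.sub_add_cancel hiln, prim.pow_eq_one]
      have he2 : (eps n ^ (n - i))⁻¹ = eps n ^ i := inv_eq_of_mul_eq_one_right he
      rw [hc, he2]
  have hhAsum : S.h * A + A * S.h
      = -∑ i ∈ Finset.Ico 1 n, S.c (i:ℤ) • (S.g ^ i * S.h) := by
    rw [hhA1, hAh, ← Finset.sum_add_distrib, ← Finset.sum_neg_distrib]
    refine Finset.sum_congr rfl fun i hi => ?_
    rw [Finset.mem_Ico] at hi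
    rw [← add_smul, ← neg_smul]
    congr 1
    have h0 : eps n ^ i ≠ 0 := pow_ne_zero _ hu0
    exact aux_field h0 (prim.pow_ne_one_of_pos_of_lt (by omega) hi.2)
  have hsplit : (S.x * S.y - S.y * S.x) * S.h
      = S.c 0 • S.h + ∑ i ∈ Finset.Ico 1 n, S.c (i:ℤ) • (S.g ^ i * S.h) := by
    rw [S.rel_comm, Finset.sum_mul, Finset.range_eq_Ico, Finset.sum_eq_sum_Ico_succ_bot hn]
    simp only [smul_mul_assoc, pow_zero, one_mul, Nat.cast_zero, zero_add]
  have hsum2 : (S.h * (S.x * S.y) + (S.x * S.y) * S.h) + (S.h * A + A * S.h)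
      = S.c 0 • S.h := by
    rw [hhxy, hhAsum]
    have h4 : -((S.y * S.x) * S.h) + (S.x * S.y) * S.h = (S.x * S.y - S.y * S.x) * S.h := by
      noncomm_ring
    rw [h4, hsplit]; abel
  have hhalf : (2:ℂ)⁻¹ + (2:ℂ)⁻¹ = 1 := by norm_num
  have final : S.h * ((S.c 0)⁻¹ • (S.x * S.y + A) - (2:ℂ)⁻¹ • 1)
      + ((S.c 0)⁻¹ • (S.x * S.y + A) - (2:ℂ)⁻¹ • 1) * S.h = 0 := by
    calc S.h * ((S.c 0)⁻¹ • (S.x * S.y + A) - (2:ℂ)⁻¹ • 1)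
          + ((S.c 0)⁻¹ • (S.x * S.y + A) - (2:ℂ)⁻¹ • 1) * S.h
        = (S.c 0)⁻¹ • ((S.h * (S.x * S.y) + (S.x * S.y) * S.h) + (S.h * A + A * S.h))
            - ((2:ℂ)⁻¹ + (2:ℂ)⁻¹) • S.h := by
          simp only [mul_sub, sub_mul, mul_smul_comm, smul_mul_assoc, mul_one, one_mul,
            mul_add, add_mul, smul_add, add_smul]
          abel
      _ = (S.c 0)⁻¹ • (S.c 0 • S.h) - (1:ℂ) • S.h := by rw [hsum2, hhalf]
      _ = 0 := by rw [smul_smul, inv_mul_cancel₀ S.c0_ne, one_smul, sub_self]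
  exact add_eq_zero_iff_eq_neg.mp final

end HcSetup

/-- A trace on an algebra: a linear map with `T(ab) = T(ba)`. -/
def IsTrace {n : ℕ} (S : HcSetup n) (T : S.H →ₗ[ℂ] ℂ) : Prop :=
  ∀ a b : S.H, T (a * b) = T (b * a)

/-- In `H_c` one has `gk = kg`, `hk = −kh`, `[k,x] = −x` (equivalently
`kx = x(k−1)`) and `[k,y] = y` (equivalently `ky = y(k+1)`). -/
theorem statement0 {n : ℕ} (S : HcSetup n) :
    S.g * S.k = S.k * S.g ∧
    S.h * S.k = -(S.k * S.h) ∧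
    S.k * S.x - S.x * S.k = -S.x ∧
    S.k * S.x = S.x * (S.k - 1) ∧
    S.k * S.y - S.y * S.k = S.y ∧
    S.k * S.y = S.y * (S.k + 1) := by
  refine ⟨S.g_mul_k, S.h_mul_k, S.k_mul_x, ?_, S.k_mul_y, ?_⟩
  · have h := S.k_mul_x
    rw [mul_sub, mul_one]
    rw [sub_eq_iff_eq_add] at h
    rw [h]; abel
  · have h := S.k_mul_y
    rw [mul_add, mul_one]
    rw [sub_eq_iff_eq_add] at h
    rw [h]; abel
end
end

section
/- For every positive integer a the following identities hold in H_c: x^a y^a = ∏_{i=0}^{a−1} (c_0(k + i) + Σ_{q=0}^{n−1} β_{q+i} e_q) and y^a x^a = (−1)^a ∏_{i=0}^{a−1} (c_0(−k + i) + Σ_{q=0}^{n−1} β_{q+i} e_{−q}). Consequently, for every integer q, x^a y^a e_q = e_q ∏_{i=0}^{a−1} (c_0(k + i) + β_{q+i}) and y^a x^a e_q = (−1)^a e_q ∏_{i=0}^{a−1} (c_0(−k + i) + β_{−q+i}). -/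
noncomputable section

open Polynomial

namespace Aux

variable {n : ℕ}

lemma prim (hn : 0 < n) : IsPrimitiveRoot (eps n) n := Complex.isPrimitiveRoot_exp n hn.ne'

lemma eps_ne (hn : 0 < n) : eps n ≠ 0 := (prim hn).ne_zero hn.ne'

lemma eps_pow_n (hn : 0 < n) : eps n ^ n = 1 := (prim hn).pow_eq_one

lemma eps_zpow_dvd (hn : 0 < n) {t : ℤ} (h : (n:ℤ) ∣ t) : eps n ^ t = 1 :=
  ((prim hn).zpow_eq_one_iff_dvd t).2 h

lemma eps_zpow_not_dvd (hn : 0 < n) {t : ℤ} (h : ¬ (n:ℤ) ∣ t) : eps n ^ t ≠ 1 :=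
  fun hc => h (((prim hn).zpow_eq_one_iff_dvd t).1 hc)

lemma eps_pow_ne_one (hn : 0 < n) {i : ℕ} (h1 : 0 < i) (h2 : i < n) : eps n ^ i ≠ 1 :=
  (prim hn).pow_ne_one_of_pos_of_lt h1.ne' h2

lemma char_sum (hn : 0 < n) (t : ℤ) :
    ∑ i ∈ Finset.range n, eps n ^ ((i:ℤ) * t) = if (n:ℤ) ∣ t then (n:ℂ) else 0 := by
  have : ∀ i ∈ Finset.range n, eps n ^ ((i:ℤ) * t) = (eps n ^ t) ^ i := by
    intro i _
    rw [mul_comm, zpow_mul]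
    norm_cast
  rw [Finset.sum_congr rfl this]
  by_cases h : (n:ℤ) ∣ t
  · simp [eps_zpow_dvd hn h, if_pos h]
  · rw [if_neg h, geom_sum_eq (eps_zpow_not_dvd hn h)]
    have : (eps n ^ t) ^ n = 1 := by
      rw [← zpow_natCast (eps n ^ t), ← zpow_mul, mul_comm, zpow_mul, zpow_natCast,
        eps_pow_n hn, one_zpow]
    rw [this, sub_self, zero_div]

/-- shift lemma for periodic sums -/
lemma sum_shift {M : Type*} [AddCommMonoid M] (hn : 0 < n) (φ : ℤ → M) (hφ : φ n = φ 0) :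
    ∑ q ∈ Finset.range n, φ ((q:ℤ) + 1) = ∑ q ∈ Finset.range n, φ (q:ℤ) := by
  obtain ⟨m, rfl⟩ := Nat.exists_eq_succ_of_ne_zero hn.ne'
  rw [Finset.sum_range_succ, Finset.sum_range_succ' (fun q : ℕ => φ (q:ℤ)) m]
  have h1 : ((m:ℤ) + 1) = ((m+1 : ℕ) : ℤ) := by push_cast; ring
  rw [h1, hφ]
  have h2 : ∀ q ∈ Finset.range m, φ ((q:ℤ)+1) = φ ((q+1 : ℕ) : ℤ) := by
    intro q _; push_cast; ring_nf
  rw [Finset.sum_congr rfl h2]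
  push_cast
  ring_nf

lemma sum_shift_nat {M : Type*} [AddCommMonoid M] (hn : 0 < n) (φ : ℕ → M) (hφ : φ n = φ 0) :
    ∑ q ∈ Finset.range n, φ (q + 1) = ∑ q ∈ Finset.range n, φ q := by
  obtain ⟨m, rfl⟩ := Nat.exists_eq_succ_of_ne_zero hn.ne'
  rw [Finset.sum_range_succ, Finset.sum_range_succ' φ m, hφ]

end Aux

namespace Aux

variable {n : ℕ} (S : HcSetup n)

lemma gpow_x (i : ℕ) : S.g ^ i * S.x = (eps n ^ i) • (S.x * S.g ^ i) := by
  induction i with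
  | zero => simp
  | succ i ih =>
    rw [pow_succ, mul_assoc, S.rel_gx, mul_smul_comm, ← mul_assoc, ih, smul_mul_assoc,
      smul_smul, pow_succ, mul_assoc, mul_comm (eps n ^ i)]

lemma gpow_y (i : ℕ) : S.g ^ i * S.y = ((eps n)⁻¹ ^ i) • (S.y * S.g ^ i) := by
  induction i with
  | zero => simp
  | succ i ih =>
    rw [pow_succ, mul_assoc, S.rel_gy, mul_smul_comm, ← mul_assoc, ih, smul_mul_assoc,
      smul_smul, pow_succ, mul_assoc, mul_comm ((eps n)⁻¹ ^ i)]

lemma g_comm_xy : S.g * (S.x * S.y) = (S.x * S.y) * S.g := by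
  have h1 : S.g * S.x * S.y = eps n • (S.x * (S.g * S.y)) := by
    rw [S.rel_gx, smul_mul_assoc, mul_assoc]
  rw [← mul_assoc, h1, S.rel_gy, mul_smul_comm, smul_smul,
    mul_inv_cancel₀ (eps_ne S.hn), one_smul, mul_assoc]

lemma gpow_comm_xy (i : ℕ) : S.g ^ i * (S.x * S.y) = (S.x * S.y) * S.g ^ i := by
  induction i with
  | zero => simp
  | succ i ih => rw [pow_succ, mul_assoc, g_comm_xy, ← mul_assoc, ih, mul_assoc]

lemma k_comm_gpow (i : ℕ) : S.k * S.g ^ i = S.g ^ i * S.k := by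
  unfold HcSetup.k
  rw [sub_mul, mul_sub, smul_mul_assoc, mul_smul_comm, smul_mul_assoc, mul_smul_comm,
    one_mul, mul_one, add_mul, mul_add, Finset.sum_mul, Finset.mul_sum, gpow_comm_xy]
  congr 2
  congr 1
  apply Finset.sum_congr rfl
  intro j _
  rw [smul_mul_assoc, mul_smul_comm, ← pow_add, ← pow_add, add_comm i j]

lemma k_comm_e (q : ℤ) : S.k * S.e q = S.e q * S.k := by
  unfold HcSetup.e
  rw [mul_smul_comm, smul_mul_assoc, Finset.mul_sum, Finset.sum_mul]
  congr 1
  refine Finset.sum_congr rfl fun j _ => ?_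
  rw [mul_smul_comm, smul_mul_assoc, k_comm_gpow]

lemma e_add_n (q : ℤ) : S.e (q + n) = S.e q := by
  unfold HcSetup.e
  congr 1
  refine Finset.sum_congr rfl fun i _ => ?_
  congr 1
  rw [mul_add, zpow_add₀ (eps_ne S.hn), mul_comm (i:ℤ) (n:ℤ), zpow_mul, zpow_natCast]
  norm_cast
  rw [pow_mul, eps_pow_n S.hn, one_pow, mul_one]

lemma e_mod {s t : ℤ} (h : (n:ℤ) ∣ s - t) : S.e s = S.e t := by
  obtain ⟨m, hm⟩ := h
  have hs : s = t + n * m := by linarith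
  subst hs
  clear hm
  induction m using Int.induction_on with
  | zero => simp
  | succ i ih => rw [mul_add, mul_one, ← add_assoc, e_add_n, ih]
  | pred i ih =>
    have h2 : t + (n:ℤ) * (-i - 1) + n = t + n * (-i) := by ring
    rw [← ih, ← h2, e_add_n]


lemma per_mod {M : Type*} (δ : ℤ → M) (hδ : ∀ t, δ (t + n) = δ t) {s t : ℤ}
    (h : (n:ℤ) ∣ s - t) : δ s = δ t := by
  obtain ⟨m, hm⟩ := h
  have hs : s = t + n * m := by linarith
  subst hs
  clear hm
  induction m using Int.induction_on with
  | zero => simp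
  | succ i ih => rw [mul_add, mul_one, ← add_assoc, hδ, ih]
  | pred i ih =>
    have h2 : t + (n:ℤ) * (-i - 1) + n = t + n * (-i) := by ring
    rw [← ih, ← h2, hδ]

lemma e_x (q : ℤ) : S.e q * S.x = S.x * S.e (q + 1) := by
  unfold HcSetup.e
  rw [smul_mul_assoc, mul_smul_comm, Finset.sum_mul, Finset.mul_sum]
  congr 1
  apply Finset.sum_congr rfl
  intro i _
  rw [smul_mul_assoc, gpow_x, smul_smul, mul_smul_comm]
  congr 1
  rw [← zpow_natCast (eps n) i, ← zpow_add₀ (eps_ne S.hn)]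
  congr 1
  ring

lemma e_y (q : ℤ) : S.e q * S.y = S.y * S.e (q - 1) := by
  unfold HcSetup.e
  rw [smul_mul_assoc, mul_smul_comm, Finset.sum_mul, Finset.mul_sum]
  congr 1
  apply Finset.sum_congr rfl
  intro i _
  rw [smul_mul_assoc, gpow_y, smul_smul, mul_smul_comm]
  congr 1
  rw [inv_pow, ← zpow_natCast (eps n) i, ← zpow_neg, ← zpow_add₀ (eps_ne S.hn)]
  congr 1
  ring

lemma g_e (q : ℤ) : S.g * S.e q = eps n ^ (-q) • S.e q := by
  have h1 : ∀ i ∈ Finset.range n, S.g * (eps n ^ ((i:ℤ)*q) • S.g ^ i)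
      = (fun i : ℕ => eps n ^ (-q) • (eps n ^ ((i:ℤ)*q) • S.g ^ i)) (i+1) := by
    intro i _
    simp only []
    rw [mul_smul_comm, smul_smul, ← zpow_add₀ (eps_ne S.hn), ← pow_succ']
    congr 2
    push_cast
    ring
  have hper : (fun i : ℕ => eps n ^ (-q) • (eps n ^ ((i:ℤ)*q) • S.g ^ i)) n
      = (fun i : ℕ => eps n ^ (-q) • (eps n ^ ((i:ℤ)*q) • S.g ^ i)) 0 := by
    simp only []
    rw [S.rel_gn, pow_zero]
    congr 2
    rw [eps_zpow_dvd S.hn (Dvd.intro q rfl)]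
    norm_num
  have main : S.g * (∑ i ∈ Finset.range n, eps n ^ ((i:ℤ)*q) • S.g ^ i)
      = eps n ^ (-q) • ∑ i ∈ Finset.range n, eps n ^ ((i:ℤ)*q) • S.g ^ i := by
    rw [Finset.mul_sum, Finset.smul_sum, Finset.sum_congr rfl h1,
      sum_shift_nat S.hn (fun i : ℕ => eps n ^ (-q) • (eps n ^ ((i:ℤ)*q) • S.g ^ i)) hper]
  unfold HcSetup.e
  rw [mul_smul_comm, main, smul_comm]

lemma gpow_e (i : ℕ) (q : ℤ) : S.g ^ i * S.e q = eps n ^ ((i:ℤ) * (-q)) • S.e q := by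
  induction i with
  | zero => simp
  | succ i ih =>
    rw [pow_succ, mul_assoc, g_e, mul_smul_comm, ih, smul_smul, ← zpow_add₀ (eps_ne S.hn)]
    congr 1
    push_cast
    ring

lemma e_e (s q : ℤ) : S.e s * S.e q = if (n:ℤ) ∣ (s - q) then S.e q else 0 := by
  conv_lhs => rw [HcSetup.e, smul_mul_assoc, Finset.sum_mul]
  have h1 : ∀ i ∈ Finset.range n, (eps n ^ ((i:ℤ)*s) • S.g ^ i) * S.e q
      = eps n ^ ((i:ℤ) * (s - q)) • S.e q := by
    intro i _
    rw [smul_mul_assoc, gpow_e, smul_smul, ← zpow_add₀ (eps_ne S.hn)]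
    congr 1
    ring
  rw [Finset.sum_congr rfl h1, ← Finset.sum_smul, char_sum S.hn, smul_smul]
  by_cases h : (n:ℤ) ∣ s - q
  · rw [if_pos h, if_pos h, inv_mul_cancel₀, one_smul]
    exact_mod_cast Nat.cast_ne_zero.2 S.hn.ne'
  · rw [if_neg h, if_neg h, mul_zero, zero_smul]

lemma sum_pick (δ : ℤ → ℂ) (hδ : ∀ t, δ (t + n) = δ t) (r : ℤ) (z : S.H) :
    ∑ q' ∈ Finset.range n, δ (q' : ℤ) • (if (n:ℤ) ∣ ((q':ℤ) - r) then z else 0) = δ r • z := by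
  have hnz : (0:ℤ) < n := by exact_mod_cast S.hn
  set q₀ : ℕ := (r % n).toNat with hq₀
  have hq₀n : ((q₀ : ℕ) : ℤ) = r % n := Int.toNat_of_nonneg (Int.emod_nonneg r hnz.ne')
  have hq₀lt : q₀ < n := by
    have := Int.emod_lt_of_pos r hnz
    omega
  have hdvd : (n:ℤ) ∣ ((q₀:ℤ) - r) := ⟨-(r / n), by rw [hq₀n, Int.emod_def]; ring⟩
  rw [Finset.sum_eq_single q₀]
  · rw [if_pos hdvd, per_mod δ hδ hdvd]
  · intro b hb hbne
    have hblt := Finset.mem_range.1 hb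
    rw [if_neg, smul_zero]
    intro hd
    have hbq : (n:ℤ) ∣ ((b:ℤ) - (q₀:ℤ)) := by
      have := Int.dvd_sub hd hdvd
      simpa using this
    have := Int.eq_zero_of_abs_lt_dvd hbq (by
      rw [abs_sub_lt_iff]
      constructor <;> (push_cast; omega))
    omega
  · intro hq
    exact absurd (Finset.mem_range.2 hq₀lt) hq


lemma yx_expand : S.y * S.x = S.x * S.y - ∑ i ∈ Finset.range n, S.c (i:ℤ) • S.g ^ i := by
  have h := S.rel_comm
  rw [sub_eq_iff_eq_add] at h
  rw [eq_sub_iff_add_eq, add_comm, ← h]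

lemma k_x : S.k * S.x = S.x * S.k - S.x := by
  have hne : ∀ i ∈ Finset.Ico 1 n, eps n ^ i - 1 ≠ 0 := by
    intro i hi
    obtain ⟨h1, h2⟩ := Finset.mem_Ico.1 hi
    exact sub_ne_zero.2 (eps_pow_ne_one S.hn h1 h2)
  have h1 : S.k * S.x = (S.c 0)⁻¹ • ((S.x*S.y)*S.x
      + (∑ i ∈ Finset.Ico 1 n, (S.c (i:ℤ)/(eps n ^ i - 1)) • S.g ^ i) * S.x)
      - (2:ℂ)⁻¹ • S.x := by
    unfold HcSetup.k
    rw [sub_mul, smul_mul_assoc, smul_mul_assoc, one_mul, add_mul]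
  have h2 : S.x * S.k = (S.c 0)⁻¹ • (S.x*(S.x*S.y)
      + S.x * (∑ i ∈ Finset.Ico 1 n, (S.c (i:ℤ)/(eps n ^ i - 1)) • S.g ^ i))
      - (2:ℂ)⁻¹ • S.x := by
    unfold HcSetup.k
    rw [mul_sub, mul_smul_comm, mul_smul_comm, mul_one, mul_add]
  have hAx : (∑ i ∈ Finset.Ico 1 n, (S.c (i:ℤ)/(eps n ^ i - 1)) • S.g ^ i) * S.x
      = ∑ i ∈ Finset.Ico 1 n, (S.c (i:ℤ) • (S.x * S.g ^ i)
          + (S.c (i:ℤ)/(eps n ^ i - 1)) • (S.x * S.g ^ i)) := by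
    rw [Finset.sum_mul]
    apply Finset.sum_congr rfl
    intro i hi
    rw [smul_mul_assoc, gpow_x, smul_smul, ← add_smul]
    congr 1
    have h2 := hne i hi
    field_simp
    ring
  have hxA : S.x * (∑ i ∈ Finset.Ico 1 n, (S.c (i:ℤ)/(eps n ^ i - 1)) • S.g ^ i)
      = ∑ i ∈ Finset.Ico 1 n, (S.c (i:ℤ)/(eps n ^ i - 1)) • (S.x * S.g ^ i) := by
    rw [Finset.mul_sum]
    exact Finset.sum_congr rfl fun i _ => mul_smul_comm _ _ _
  have hxC : S.x * (∑ i ∈ Finset.range n, S.c (i:ℤ) • S.g ^ i)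
      = S.c 0 • S.x + ∑ i ∈ Finset.Ico 1 n, S.c (i:ℤ) • (S.x * S.g ^ i) := by
    rw [Finset.mul_sum, Finset.range_eq_Ico, Finset.sum_eq_sum_Ico_succ_bot S.hn]
    congr 1
    · rw [mul_smul_comm, pow_zero, mul_one]
      norm_num
    · exact Finset.sum_congr rfl fun i _ => mul_smul_comm _ _ _
  have h3 : (S.x*S.y)*S.x
      + (∑ i ∈ Finset.Ico 1 n, (S.c (i:ℤ)/(eps n ^ i - 1)) • S.g ^ i) * S.x
      = S.x*(S.x*S.y)
      + S.x * (∑ i ∈ Finset.Ico 1 n, (S.c (i:ℤ)/(eps n ^ i - 1)) • S.g ^ i)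
      - S.c 0 • S.x := by
    rw [hAx, hxA, mul_assoc, yx_expand, mul_sub, hxC, Finset.sum_add_distrib]
    abel
  rw [h1, h3, smul_sub, smul_smul, inv_mul_cancel₀ S.c0_ne, one_smul, h2]
  abel

lemma k_y : S.k * S.y = S.y * S.k + S.y := by
  have hne : ∀ i ∈ Finset.Ico 1 n, eps n ^ i - 1 ≠ 0 := by
    intro i hi
    obtain ⟨h1, h2⟩ := Finset.mem_Ico.1 hi
    exact sub_ne_zero.2 (eps_pow_ne_one S.hn h1 h2)
  have h1 : S.k * S.y = (S.c 0)⁻¹ • ((S.x*S.y)*S.y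
      + (∑ i ∈ Finset.Ico 1 n, (S.c (i:ℤ)/(eps n ^ i - 1)) • S.g ^ i) * S.y)
      - (2:ℂ)⁻¹ • S.y := by
    unfold HcSetup.k
    rw [sub_mul, smul_mul_assoc, smul_mul_assoc, one_mul, add_mul]
  have h2 : S.y * S.k = (S.c 0)⁻¹ • (S.y*(S.x*S.y)
      + S.y * (∑ i ∈ Finset.Ico 1 n, (S.c (i:ℤ)/(eps n ^ i - 1)) • S.g ^ i))
      - (2:ℂ)⁻¹ • S.y := by
    unfold HcSetup.k
    rw [mul_sub, mul_smul_comm, mul_smul_comm, mul_one, mul_add]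
  have hAy : (∑ i ∈ Finset.Ico 1 n, (S.c (i:ℤ)/(eps n ^ i - 1)) • S.g ^ i) * S.y
      = ∑ i ∈ Finset.Ico 1 n, ((S.c (i:ℤ)/(eps n ^ i - 1)) • (S.y * S.g ^ i)
          - (S.c (i:ℤ) * ((eps n)⁻¹)^i) • (S.y * S.g ^ i)) := by
    rw [Finset.sum_mul]
    apply Finset.sum_congr rfl
    intro i hi
    rw [smul_mul_assoc, gpow_y, smul_smul, ← sub_smul]
    congr 1
    have h2 := hne i hi
    have h0 : eps n ^ i ≠ 0 := pow_ne_zero _ (eps_ne S.hn)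
    rw [inv_pow]
    field_simp
    ring
  have hyA : S.y * (∑ i ∈ Finset.Ico 1 n, (S.c (i:ℤ)/(eps n ^ i - 1)) • S.g ^ i)
      = ∑ i ∈ Finset.Ico 1 n, (S.c (i:ℤ)/(eps n ^ i - 1)) • (S.y * S.g ^ i) := by
    rw [Finset.mul_sum]
    exact Finset.sum_congr rfl fun i _ => mul_smul_comm _ _ _
  have hCy : (∑ i ∈ Finset.range n, S.c (i:ℤ) • S.g ^ i) * S.y
      = S.c 0 • S.y + ∑ i ∈ Finset.Ico 1 n, (S.c (i:ℤ) * ((eps n)⁻¹)^i) • (S.y * S.g ^ i) := by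
    rw [Finset.sum_mul, Finset.range_eq_Ico, Finset.sum_eq_sum_Ico_succ_bot S.hn]
    congr 1
    · rw [smul_mul_assoc, pow_zero, one_mul]
      norm_num
    · apply Finset.sum_congr rfl
      intro i _
      rw [smul_mul_assoc, gpow_y, smul_smul]
  have h3 : (S.x*S.y)*S.y
      + (∑ i ∈ Finset.Ico 1 n, (S.c (i:ℤ)/(eps n ^ i - 1)) • S.g ^ i) * S.y
      = S.y*(S.x*S.y)
      + S.y * (∑ i ∈ Finset.Ico 1 n, (S.c (i:ℤ)/(eps n ^ i - 1)) • S.g ^ i)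
      + S.c 0 • S.y := by
    have hy : S.y*(S.x*S.y) = (S.x*S.y)*S.y
        - ((∑ i ∈ Finset.range n, S.c (i:ℤ) • S.g ^ i) * S.y) := by
      rw [← mul_assoc, yx_expand, sub_mul]
    rw [hAy, hyA, hy, hCy, Finset.sum_sub_distrib]
    abel
  rw [h1, h3, smul_add, smul_smul, inv_mul_cancel₀ S.c0_ne, one_smul, h2]
  abel


lemma h_pow4 : S.h ^ 4 = 1 := by
  have h2 : n / 2 * 2 = n := Nat.div_mul_cancel S.heven.two_dvd
  rw [show (4:ℕ) = 2*2 from rfl, pow_mul, S.rel_h2, ← pow_mul, h2, S.rel_gn]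

lemma hh3 : S.h * S.h ^ 3 = 1 := by rw [← pow_succ', h_pow4]

lemma h3h : S.h ^ 3 * S.h = 1 := by rw [← pow_succ, h_pow4]

lemma h_gpow : ∀ i, i ≤ n → S.h * S.g ^ i = S.g ^ (n - i) * S.h := by
  intro i
  induction i with
  | zero => intro _; simp [S.rel_gn]
  | succ i ih =>
    intro hle
    have hi : i ≤ n := Nat.le_of_succ_le hle
    rw [pow_succ, ← mul_assoc, ih hi, mul_assoc, S.rel_hg, ← mul_assoc, ← pow_add]
    have harith : (n - i) + (n - 1) = n + (n - (i+1)) := by omega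
    rw [harith, pow_add, S.rel_gn, one_mul]

lemma conj_gpow (i : ℕ) (hi : i ≤ n) : S.h * S.g ^ i * S.h ^ 3 = S.g ^ (n - i) := by
  rw [h_gpow S i hi, mul_assoc, hh3, mul_one]

lemma conj_xy : S.h * (S.x * S.y) * S.h ^ 3 = -(S.y * S.x) := by
  have h1 : S.h * (S.x * S.y) = -(S.y * S.x * S.h) := by
    rw [← mul_assoc, S.rel_hx, mul_assoc, S.rel_hy, mul_neg, ← mul_assoc]
  rw [h1, neg_mul, mul_assoc, hh3, mul_one]

lemma conj_e (q : ℤ) : S.h * S.e q * S.h ^ 3 = S.e (-q) := by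
  unfold HcSetup.e
  rw [mul_smul_comm, smul_mul_assoc, Finset.mul_sum, Finset.sum_mul]
  congr 1
  have h1 : ∀ i ∈ Finset.range n, S.h * (eps n ^ ((i:ℤ)*q) • S.g ^ i) * S.h ^ 3
      = eps n ^ ((i:ℤ)*q) • S.g ^ (n - i) := by
    intro i hi
    rw [mul_smul_comm, smul_mul_assoc, conj_gpow S i (le_of_lt (Finset.mem_range.1 hi))]
  rw [Finset.sum_congr rfl h1, Finset.range_eq_Ico,
    Finset.sum_eq_sum_Ico_succ_bot S.hn, Finset.sum_eq_sum_Ico_succ_bot S.hn]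
  congr 1
  · norm_num [S.rel_gn]
  · refine Finset.sum_nbij' (fun i => n - i) (fun i => n - i) ?_ ?_ ?_ ?_ ?_
    · intro a ha
      simp only [Finset.mem_Ico] at ha ⊢
      omega
    · intro a ha
      simp only [Finset.mem_Ico] at ha ⊢
      omega
    · intro a ha
      simp only [Finset.mem_Ico] at ha
      show n - (n - a) = a
      omega
    · intro a ha
      simp only [Finset.mem_Ico] at ha
      show n - (n - a) = a
      omega
    · intro a ha
      simp only [Finset.mem_Ico] at ha
      obtain ⟨ha1, ha2⟩ := ha
      have hc : ((n - a : ℕ) : ℤ) = (n:ℤ) - a := by omega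
      have hz : eps n ^ (-((n:ℤ)*q)) = 1 := eps_zpow_dvd S.hn ⟨-q, by ring⟩
      show eps n ^ ((a:ℤ)*q) • S.g ^ (n - a)
          = eps n ^ ((((n-a:ℕ)):ℤ) * (-q)) • S.g ^ (n - a)
      rw [hc, show ((n:ℤ)-a)*(-q) = -((n:ℤ)*q) + (a:ℤ)*q from by ring,
        zpow_add₀ (eps_ne S.hn), hz, one_mul]

lemma conj_k : S.h * S.k * S.h ^ 3 = - S.k := by
  have hne : ∀ i ∈ Finset.Ico 1 n, eps n ^ i - 1 ≠ 0 := by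
    intro i hi
    obtain ⟨h1, h2⟩ := Finset.mem_Ico.1 hi
    exact sub_ne_zero.2 (eps_pow_ne_one S.hn h1 h2)
  have hconjA : S.h * (∑ i ∈ Finset.Ico 1 n, (S.c (i:ℤ)/(eps n ^ i - 1)) • S.g ^ i) * S.h ^ 3
      = ∑ i ∈ Finset.Ico 1 n, (S.c ((n:ℤ)-(i:ℤ))/(eps n ^ (n-i) - 1)) • S.g ^ i := by
    rw [Finset.mul_sum, Finset.sum_mul]
    refine Finset.sum_nbij' (fun i => n - i) (fun i => n - i) ?_ ?_ ?_ ?_ ?_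
    · intro a ha
      simp only [Finset.mem_Ico] at ha ⊢
      omega
    · intro a ha
      simp only [Finset.mem_Ico] at ha ⊢
      omega
    · intro a ha
      simp only [Finset.mem_Ico] at ha
      show n - (n - a) = a
      omega
    · intro a ha
      simp only [Finset.mem_Ico] at ha
      show n - (n - a) = a
      omega
    · intro a ha
      simp only [Finset.mem_Ico] at ha
      obtain ⟨ha1, ha2⟩ := ha
      show S.h * ((S.c (a:ℤ)/(eps n ^ a - 1)) • S.g ^ a) * S.h ^ 3
          = (S.c ((n:ℤ)-((n-a:ℕ):ℤ))/(eps n ^ (n-(n-a)) - 1)) • S.g ^ (n-a)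
      have e1 : ((n:ℤ) - ((n-a:ℕ):ℤ)) = (a:ℤ) := by omega
      have e2 : n - (n - a) = a := by omega
      rw [mul_smul_comm, smul_mul_assoc, conj_gpow S a (by omega), e1, e2]
  have hscal : ∀ i ∈ Finset.Ico 1 n,
      (S.c ((n:ℤ)-(i:ℤ))/(eps n ^ (n-i) - 1))
        = - S.c (i:ℤ) - S.c (i:ℤ)/(eps n ^ i - 1) := by
    intro i hi
    obtain ⟨hi1, hi2⟩ := Finset.mem_Ico.1 hi
    have hcc : S.c ((n:ℤ)-(i:ℤ)) = S.c (i:ℤ) := by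
      rw [show (n:ℤ)-(i:ℤ) = -(i:ℤ) + n from by ring, S.c_per, S.c_symm]
    have hu0 : eps n ^ i ≠ 0 := pow_ne_zero _ (eps_ne S.hn)
    have hu1 : eps n ^ i - 1 ≠ 0 := sub_ne_zero.2 (eps_pow_ne_one S.hn hi1 hi2)
    have hinv : eps n ^ (n-i) = (eps n ^ i)⁻¹ := by
      refine eq_inv_of_mul_eq_one_left ?_
      rw [← pow_add, Nat.sub_add_cancel (le_of_lt hi2), eps_pow_n S.hn]
    have hu2 : (eps n ^ i)⁻¹ - 1 ≠ 0 := by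
      rw [sub_ne_zero, ne_comm]
      intro hc
      exact (eps_pow_ne_one S.hn hi1 hi2) (by rw [← inv_inv (eps n ^ i), ← hc, inv_one])
    have h1u : (1:ℂ) - eps n ^ i ≠ 0 := sub_ne_zero.2 (Ne.symm (eps_pow_ne_one S.hn hi1 hi2))
    have hid : (eps n ^ i)⁻¹ - 1 = (1 - eps n ^ i) / eps n ^ i := by
      field_simp
    rw [hcc, hinv, hid, div_div_eq_mul_div]
    field_simp
    ring
  have hsum : (∑ i ∈ Finset.range n, S.c (i:ℤ) • S.g ^ i)
      + ∑ i ∈ Finset.Ico 1 n, (S.c ((n:ℤ)-(i:ℤ))/(eps n ^ (n-i) - 1)) • S.g ^ i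
      = S.c 0 • (1:S.H) - ∑ i ∈ Finset.Ico 1 n, (S.c (i:ℤ)/(eps n ^ i - 1)) • S.g ^ i := by
    have hz : ∀ i ∈ Finset.Ico 1 n, (S.c ((n:ℤ)-(i:ℤ))/(eps n ^ (n-i) - 1)) • S.g ^ i
        = (- S.c (i:ℤ) - S.c (i:ℤ)/(eps n ^ i - 1)) • S.g ^ i := by
      intro i hi
      rw [hscal i hi]
    rw [Finset.sum_congr rfl hz, Finset.range_eq_Ico, Finset.sum_eq_sum_Ico_succ_bot S.hn,
      pow_zero]
    have hcomb : (∑ i ∈ Finset.Ico (0+1) n, S.c (i:ℤ) • S.g ^ i)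
        + ∑ i ∈ Finset.Ico 1 n, (- S.c (i:ℤ) - S.c (i:ℤ)/(eps n ^ i - 1)) • S.g ^ i
        = - ∑ i ∈ Finset.Ico 1 n, (S.c (i:ℤ)/(eps n ^ i - 1)) • S.g ^ i := by
      rw [show (0+1) = 1 from rfl, ← Finset.sum_add_distrib, ← Finset.sum_neg_distrib]
      apply Finset.sum_congr rfl
      intro i _
      rw [← add_smul, ← neg_smul]
      congr 1
      ring
    rw [add_assoc, hcomb]
    norm_num
    abel
  unfold HcSetup.k
  rw [mul_sub, sub_mul, mul_smul_comm, smul_mul_assoc, mul_smul_comm, smul_mul_assoc,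
    mul_one, hh3, mul_add, add_mul, conj_xy, hconjA, yx_expand, neg_sub]
  have hre : ((∑ i ∈ Finset.range n, S.c (i:ℤ) • S.g ^ i) - S.x * S.y)
      + ∑ i ∈ Finset.Ico 1 n, (S.c ((n:ℤ)-(i:ℤ))/(eps n ^ (n-i) - 1)) • S.g ^ i
      = ((∑ i ∈ Finset.range n, S.c (i:ℤ) • S.g ^ i)
        + ∑ i ∈ Finset.Ico 1 n, (S.c ((n:ℤ)-(i:ℤ))/(eps n ^ (n-i) - 1)) • S.g ^ i)
        - S.x * S.y := by abel
  rw [hre, hsum]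
  have hone : (1:S.H) = (2:ℂ)⁻¹ • (1:S.H) + (2:ℂ)⁻¹ • (1:S.H) := by
    rw [← add_smul]
    norm_num
  match_scalars <;> (field_simp [S.c0_ne]; try norm_num)


lemma yx_formula (β : ℤ → ℂ)
    (hβ : S.x * S.y = S.c 0 • S.k + ∑ q ∈ Finset.range n, β (q:ℤ) • S.e (q:ℤ)) :
    S.y * S.x = S.c 0 • S.k - ∑ q ∈ Finset.range n, β (q:ℤ) • S.e (-(q:ℤ)) := by
  have hc := congrArg (fun z => S.h * z * S.h ^ 3) hβ
  rw [conj_xy, mul_add, add_mul, mul_smul_comm, smul_mul_assoc, conj_k,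
    Finset.mul_sum, Finset.sum_mul] at hc
  have h2 : ∀ q ∈ Finset.range n, (S.h * (β (q:ℤ) • S.e (q:ℤ))) * S.h^3
      = β (q:ℤ) • S.e (-(q:ℤ)) := by
    intro q _
    rw [mul_smul_comm, smul_mul_assoc, conj_e]
  rw [Finset.sum_congr rfl h2] at hc
  have h3 := congrArg Neg.neg hc
  rw [neg_neg, neg_add, smul_neg, neg_neg, ← sub_eq_add_neg] at h3
  exact h3

/-- the factor for `x^a y^a` -/
def Ffun (S : HcSetup n) (β : ℤ → ℂ) (i : ℕ) : S.H :=
  S.c 0 • (S.k + (i : ℂ) • (1 : S.H)) + ∑ q ∈ Finset.range n, β ((q : ℤ) + (i : ℤ)) • S.e (q : ℤ)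

/-- the factor for `y^a x^a` -/
def Gfun (S : HcSetup n) (β : ℤ → ℂ) (i : ℕ) : S.H :=
  S.c 0 • (-S.k + (i : ℂ) • (1 : S.H)) + ∑ q ∈ Finset.range n, β ((q : ℤ) + (i : ℤ)) • S.e (-(q : ℤ))

variable (β : ℤ → ℂ) (hβper : ∀ q : ℤ, β (q + n) = β q)

include hβper in
lemma Fstep (i : ℕ) : Ffun S β i * S.y = S.y * Ffun S β (i+1) := by
  unfold Ffun
  rw [add_mul, mul_add]
  congr 1
  · rw [smul_mul_assoc, mul_smul_comm, add_mul, mul_add, smul_mul_assoc, one_mul,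
      mul_smul_comm, mul_one, k_y]
    congr 1
    push_cast
    rw [add_smul, one_smul]
    abel
  · rw [Finset.sum_mul, Finset.mul_sum]
    have h1 : ∀ q ∈ Finset.range n, β ((q:ℤ)+(i:ℤ)) • S.e (q:ℤ) * S.y
        = (fun t : ℤ => β (t+(i:ℤ)) • (S.y * S.e (t-1))) (q:ℤ) := by
      intro q _
      simp only []
      rw [smul_mul_assoc, e_y]
    rw [Finset.sum_congr rfl h1]
    have hφ : (fun t : ℤ => β (t+(i:ℤ)) • (S.y * S.e (t-1))) (n:ℤ)
        = (fun t : ℤ => β (t+(i:ℤ)) • (S.y * S.e (t-1))) 0 := by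
      simp only []
      rw [show (n:ℤ)+(i:ℤ) = ((0:ℤ)+(i:ℤ))+(n:ℤ) from by ring, hβper,
        show (n:ℤ)-1 = ((0:ℤ)-1)+(n:ℤ) from by ring, e_add_n]
    rw [← sum_shift S.hn (fun t : ℤ => β (t+(i:ℤ)) • (S.y * S.e (t-1))) hφ]
    apply Finset.sum_congr rfl
    intro q _
    show β ((q:ℤ)+1+(i:ℤ)) • (S.y * S.e ((q:ℤ)+1-1)) = S.y * (β ((q:ℤ)+((i+1:ℕ):ℤ)) • S.e (q:ℤ))
    rw [mul_smul_comm, show (q:ℤ)+1+(i:ℤ) = (q:ℤ)+((i+1:ℕ):ℤ) from by push_cast; ring,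
      show (q:ℤ)+1-1 = (q:ℤ) from by ring]

include hβper in
lemma Gstep (i : ℕ) : Gfun S β i * S.x = S.x * Gfun S β (i+1) := by
  unfold Gfun
  rw [add_mul, mul_add]
  congr 1
  · rw [smul_mul_assoc, mul_smul_comm, add_mul, mul_add, smul_mul_assoc, one_mul,
      mul_smul_comm, mul_one, neg_mul, k_x, mul_neg]
    congr 1
    push_cast
    rw [add_smul, one_smul, neg_sub]
    abel
  · rw [Finset.sum_mul, Finset.mul_sum]
    have h1 : ∀ q ∈ Finset.range n, β ((q:ℤ)+(i:ℤ)) • S.e (-(q:ℤ)) * S.x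
        = (fun t : ℤ => β (t+(i:ℤ)) • (S.x * S.e (-(t-1)))) (q:ℤ) := by
      intro q _
      simp only []
      rw [smul_mul_assoc, e_x, show -(q:ℤ)+1 = -((q:ℤ)-1) from by ring]
    rw [Finset.sum_congr rfl h1]
    have hφ : (fun t : ℤ => β (t+(i:ℤ)) • (S.x * S.e (-(t-1)))) (n:ℤ)
        = (fun t : ℤ => β (t+(i:ℤ)) • (S.x * S.e (-(t-1)))) 0 := by
      simp only []
      rw [show (n:ℤ)+(i:ℤ) = ((0:ℤ)+(i:ℤ))+(n:ℤ) from by ring, hβper,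
        show -((n:ℤ)-1) = -((0:ℤ)-1)+-(n:ℤ) from by ring]
      congr 2
      exact e_mod S ⟨-1, by ring⟩
    rw [← sum_shift S.hn (fun t : ℤ => β (t+(i:ℤ)) • (S.x * S.e (-(t-1)))) hφ]
    apply Finset.sum_congr rfl
    intro q _
    show β ((q:ℤ)+1+(i:ℤ)) • (S.x * S.e (-((q:ℤ)+1-1)))
        = S.x * (β ((q:ℤ)+((i+1:ℕ):ℤ)) • S.e (-(q:ℤ)))
    rw [mul_smul_comm, show (q:ℤ)+1+(i:ℤ) = (q:ℤ)+((i+1:ℕ):ℤ) from by push_cast; ring,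
      show (q:ℤ)+1-1 = (q:ℤ) from by ring]

include hβper in
lemma Fmove (i b : ℕ) : Ffun S β i * S.y ^ b = S.y ^ b * Ffun S β (i+b) := by
  induction b with
  | zero => simp
  | succ b ih =>
    rw [pow_succ, ← mul_assoc, ih, mul_assoc, Fstep S β hβper, ← mul_assoc, ← pow_succ, Nat.add_assoc]

include hβper in
lemma Gmove (i b : ℕ) : Gfun S β i * S.x ^ b = S.x ^ b * Gfun S β (i+b) := by
  induction b with
  | zero => simp
  | succ b ih =>
    rw [pow_succ, ← mul_assoc, ih, mul_assoc, Gstep S β hβper, ← mul_assoc, ← pow_succ, Nat.add_assoc]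


include hβper in
lemma xaya (hβ : S.x * S.y = S.c 0 • S.k + ∑ q ∈ Finset.range n, β (q:ℤ) • S.e (q:ℤ))
    (a : ℕ) :
    S.x ^ a * S.y ^ a = ((List.range a).map (Ffun S β)).prod := by
  have hβ0 : S.x * S.y = Ffun S β 0 := by
    rw [hβ]
    unfold Ffun
    norm_num
  induction a with
  | zero => simp
  | succ a ih =>
    rw [List.range_succ, List.map_append, List.prod_append, List.map_singleton,
      List.prod_singleton, ← ih]
    rw [pow_succ S.x, pow_succ' S.y, mul_assoc, ← mul_assoc S.x, hβ0, ← mul_assoc,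
      mul_assoc _ (Ffun S β 0), Fmove S β hβper, Nat.zero_add, ← mul_assoc]

include hβper in
lemma yaxa (hβ : S.x * S.y = S.c 0 • S.k + ∑ q ∈ Finset.range n, β (q:ℤ) • S.e (q:ℤ))
    (a : ℕ) :
    S.y ^ a * S.x ^ a = (-1 : ℂ) ^ a • ((List.range a).map (Gfun S β)).prod := by
  have hβ0 : S.y * S.x = (-1 : ℂ) • Gfun S β 0 := by
    rw [yx_formula S β hβ]
    unfold Gfun
    norm_num
    abel
  induction a with
  | zero => simp
  | succ a ih =>
    rw [List.range_succ, List.map_append, List.prod_append, List.map_singleton,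
      List.prod_singleton]
    rw [pow_succ S.y, pow_succ' S.x, mul_assoc, ← mul_assoc S.y, hβ0, smul_mul_assoc,
      mul_smul_comm, Gmove S β hβper, Nat.zero_add, ← mul_assoc, ih, smul_mul_assoc,
      smul_smul, pow_succ, mul_comm ((-1:ℂ)^a)]


include hβper in
lemma Fe (i : ℕ) (q : ℤ) : Ffun S β i * S.e q
    = S.e q * (S.c 0 • (S.k + (i:ℂ) • (1:S.H)) + β (q+(i:ℤ)) • (1:S.H)) := by
  unfold Ffun
  rw [add_mul, mul_add]
  congr 1
  · rw [smul_mul_assoc, mul_smul_comm, add_mul, mul_add, smul_mul_assoc, one_mul,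
      mul_smul_comm, mul_one, k_comm_e]
  · have h1 : ∀ q' ∈ Finset.range n, β ((q':ℤ)+(i:ℤ)) • S.e (q':ℤ) * S.e q
        = (fun t : ℤ => β (t+(i:ℤ))) (q':ℤ) • (if (n:ℤ) ∣ ((q':ℤ) - q) then S.e q else 0) := by
      intro q' _
      simp only []
      rw [smul_mul_assoc, e_e]
    have hδ : ∀ t : ℤ, (fun t : ℤ => β (t+(i:ℤ))) (t + n) = (fun t : ℤ => β (t+(i:ℤ))) t := by
      intro t
      simp only []
      rw [show t+(n:ℤ)+(i:ℤ) = (t+(i:ℤ))+(n:ℤ) from by ring, hβper]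
    rw [Finset.sum_mul, Finset.sum_congr rfl h1, sum_pick S (fun t : ℤ => β (t+(i:ℤ))) hδ q (S.e q),
      mul_smul_comm, mul_one]

include hβper in
lemma Ge (i : ℕ) (q : ℤ) : Gfun S β i * S.e q
    = S.e q * (S.c 0 • (-S.k + (i:ℂ) • (1:S.H)) + β (-q+(i:ℤ)) • (1:S.H)) := by
  unfold Gfun
  rw [add_mul, mul_add]
  congr 1
  · rw [smul_mul_assoc, mul_smul_comm, add_mul, mul_add, smul_mul_assoc, one_mul,
      mul_smul_comm, mul_one, neg_mul, k_comm_e, mul_neg]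
  · have h1 : ∀ q' ∈ Finset.range n, β ((q':ℤ)+(i:ℤ)) • S.e (-(q':ℤ)) * S.e q
        = (fun t : ℤ => β (t+(i:ℤ))) (q':ℤ) • (if (n:ℤ) ∣ ((q':ℤ) - (-q)) then S.e q else 0) := by
      intro q' _
      simp only []
      rw [smul_mul_assoc, e_e]
      congr 1
      rw [show -(q':ℤ) - q = -((q':ℤ) - (-q)) from by ring]
      exact if_congr (dvd_neg) rfl rfl
    have hδ : ∀ t : ℤ, (fun t : ℤ => β (t+(i:ℤ))) (t + n) = (fun t : ℤ => β (t+(i:ℤ))) t := by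
      intro t
      simp only []
      rw [show t+(n:ℤ)+(i:ℤ) = (t+(i:ℤ))+(n:ℤ) from by ring, hβper]
    rw [Finset.sum_mul, Finset.sum_congr rfl h1, sum_pick S (fun t : ℤ => β (t+(i:ℤ))) hδ (-q) (S.e q),
      mul_smul_comm, mul_one]

include hβper in
lemma prodFe (a : ℕ) (q : ℤ) :
    ((List.range a).map (Ffun S β)).prod * S.e q
      = S.e q * ((List.range a).map (fun i : ℕ =>
          S.c 0 • (S.k + (i : ℂ) • (1 : S.H)) + β (q + (i : ℤ)) • (1 : S.H))).prod := by
  induction a with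
  | zero => simp
  | succ a ih =>
    rw [List.range_succ, List.map_append, List.prod_append, List.map_singleton,
      List.prod_singleton, List.map_append, List.prod_append, List.map_singleton,
      List.prod_singleton, mul_assoc, Fe S β hβper, ← mul_assoc, ih, mul_assoc]

include hβper in
lemma prodGe (a : ℕ) (q : ℤ) :
    ((List.range a).map (Gfun S β)).prod * S.e q
      = S.e q * ((List.range a).map (fun i : ℕ =>
          S.c 0 • (-S.k + (i : ℂ) • (1 : S.H)) + β (-q + (i : ℤ)) • (1 : S.H))).prod := by
  induction a with
  | zero => simp
  | succ a ih =>
    rw [List.range_succ, List.map_append, List.prod_append, List.map_singleton,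
      List.prod_singleton, List.map_append, List.prod_append, List.map_singleton,
      List.prod_singleton, mul_assoc, Ge S β hβper, ← mul_assoc, ih, mul_assoc]

end Aux

/-- formulas for `x^a y^a`, `y^a x^a` and for `x^a y^a e_q`, `y^a x^a e_q`,
where `β` is defined by `xy = c_0 k + Σ_{q=0}^{n-1} β_q e_q` and `β_{q+n} = β_q`. -/
theorem statement1 {n : ℕ} (S : HcSetup n) (β : ℤ → ℂ)
    (hβper : ∀ q : ℤ, β (q + n) = β q)
    (hβ : S.x * S.y = S.c 0 • S.k + ∑ q ∈ Finset.range n, β (q : ℤ) • S.e (q : ℤ))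
    (a : ℕ) (ha : 0 < a) :
    (S.x ^ a * S.y ^ a =
      ((List.range a).map (fun i : ℕ =>
        S.c 0 • (S.k + (i : ℂ) • (1 : S.H)) +
          ∑ q ∈ Finset.range n, β ((q : ℤ) + (i : ℤ)) • S.e (q : ℤ))).prod) ∧
    (S.y ^ a * S.x ^ a =
      (-1 : ℂ) ^ a • ((List.range a).map (fun i : ℕ =>
        S.c 0 • (-S.k + (i : ℂ) • (1 : S.H)) +
          ∑ q ∈ Finset.range n, β ((q : ℤ) + (i : ℤ)) • S.e (-(q : ℤ)))).prod) ∧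
    (∀ q : ℤ,
      S.x ^ a * S.y ^ a * S.e q =
        S.e q * ((List.range a).map (fun i : ℕ =>
          S.c 0 • (S.k + (i : ℂ) • (1 : S.H)) + β (q + (i : ℤ)) • (1 : S.H))).prod) ∧
    (∀ q : ℤ,
      S.y ^ a * S.x ^ a * S.e q =
        (-1 : ℂ) ^ a • (S.e q * ((List.range a).map (fun i : ℕ =>
          S.c 0 • (-S.k + (i : ℂ) • (1 : S.H)) + β (-q + (i : ℤ)) • (1 : S.H))).prod)) := by
  refine ⟨Aux.xaya S β hβper hβ a, Aux.yaxa S β hβper hβ a, fun q => ?_, fun q => ?_⟩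
  · rw [Aux.xaya S β hβper hβ a, Aux.prodFe S β hβper a q]
  · rw [Aux.yaxa S β hβper hβ a, smul_mul_assoc, Aux.prodGe S β hβper a q]
end
end

section
/- Let T be a trace on H_c. If the integer q is not divisible by m = n/2, then T(e_q h) = 0. -/
noncomputable section

open Polynomial

section Aux

variable {n : ℕ}

/-- `h gᵏ = g^{k(n-1)} h`. -/
lemma h_g_pow (S : HcSetup n) (k : ℕ) : S.h * S.g ^ k = S.g ^ (k * (n - 1)) * S.h := by
  induction k with
  | zero => simp
  | succ k ih =>
    rw [pow_succ, ← mul_assoc, ih, mul_assoc, S.rel_hg, ← mul_assoc, ← pow_add]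
    ring_nf

/-- `h g^{n-1} = g h`. -/
lemma h_g_conj (S : HcSetup n) (hn2 : 2 ≤ n) : S.h * S.g ^ (n - 1) = S.g * S.h := by
  rw [h_g_pow]
  have key : (n - 1) * (n - 1) = n * (n - 2) + 1 := by
    obtain ⟨l, rfl⟩ : ∃ l, n = l + 2 := ⟨n - 2, by omega⟩
    have h1 : l + 2 - 1 = l + 1 := rfl
    have h2 : l + 2 - 2 = l := rfl
    rw [h1, h2]; ring
  rw [key, pow_add, pow_mul, S.rel_gn, one_pow, one_mul, pow_one]

lemma trace_step (S : HcSetup n) (T : S.H →ₗ[ℂ] ℂ) (hT : IsTrace S T) (hn2 : 2 ≤ n)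
    (i : ℕ) : T (S.g ^ (i + 2) * S.h) = T (S.g ^ i * S.h) := by
  have e1 : S.g ^ i * S.h = (S.g ^ i * S.h * S.g ^ (n - 1)) * S.g := by
    rw [mul_assoc (S.g ^ i * S.h), ← pow_succ]
    have : n - 1 + 1 = n := by omega
    rw [this, S.rel_gn, mul_one]
  have key : S.g * (S.g ^ i * S.h * S.g ^ (n - 1)) = S.g ^ (i + 2) * S.h := by
    rw [mul_assoc (S.g ^ i), h_g_conj S hn2, ← mul_assoc, ← mul_assoc,
      ← pow_succ', ← pow_succ]
  calc T (S.g ^ (i + 2) * S.h) = T (S.g * (S.g ^ i * S.h * S.g ^ (n - 1))) := by rw [key]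
    _ = T ((S.g ^ i * S.h * S.g ^ (n - 1)) * S.g) := hT _ _
    _ = T (S.g ^ i * S.h) := by rw [← e1]

lemma trace_mod2 (S : HcSetup n) (T : S.H →ₗ[ℂ] ℂ) (hT : IsTrace S T) (hn2 : 2 ≤ n)
    (j r : ℕ) : T (S.g ^ (2 * j + r) * S.h) = T (S.g ^ r * S.h) := by
  induction j with
  | zero => simp
  | succ j ih =>
    have : 2 * (j + 1) + r = (2 * j + r) + 2 := by ring
    rw [this, trace_step S T hT hn2, ih]

lemma sum_range_two_mul (f : ℕ → ℂ) (m : ℕ) :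
    ∑ i ∈ Finset.range (2 * m), f i
      = ∑ j ∈ Finset.range m, f (2 * j) + ∑ j ∈ Finset.range m, f (2 * j + 1) := by
  induction m with
  | zero => simp
  | succ m ih =>
    have : 2 * (m + 1) = (2 * m + 1) + 1 := by ring
    rw [this, Finset.sum_range_succ, Finset.sum_range_succ, Finset.sum_range_succ,
      Finset.sum_range_succ, ih]
    ring

end Aux

/-- if `T` is a trace on `H_c` and `m = n/2` does not divide `q`,
then `T(e_q h) = 0`. -/
theorem statement3 {n : ℕ} (S : HcSetup n) (T : S.H →ₗ[ℂ] ℂ) (hT : IsTrace S T)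
    (q : ℤ) (hq : ¬ ((n / 2 : ℤ) ∣ q)) :
    T (S.e q * S.h) = 0 := by
  obtain ⟨m, hm⟩ := S.heven
  have hn2m : n = 2 * m := by omega
  have hn0 : n ≠ 0 := by have := S.hn; omega
  have hm0 : 0 < m := by omega
  have hn2 : 2 ≤ n := by omega
  have hqm : ¬ ((m : ℤ) ∣ q) := by
    have : ((n : ℤ) / 2) = (m : ℤ) := by rw [hn2m]; push_cast; omega
    rwa [this] at hq
  have prim : IsPrimitiveRoot (eps n) n := Complex.isPrimitiveRoot_exp n hn0
  have heps0 : eps n ≠ 0 := Complex.exp_ne_zero _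
  set x : ℂ := eps n ^ (2 * q) with hxdef
  have hx1 : x ^ m = 1 := by
    rw [hxdef, ← zpow_natCast (eps n ^ (2 * q)) m, ← zpow_mul]
    have : 2 * q * (m : ℤ) = (n : ℤ) * q := by rw [hn2m]; push_cast; ring
    rw [this, zpow_mul, zpow_natCast, prim.pow_eq_one, one_zpow]
  have hxne : x ≠ 1 := by
    intro hx
    rw [hxdef, prim.zpow_eq_one_iff_dvd] at hx
    have hnm : (n : ℤ) = 2 * (m : ℤ) := by rw [hn2m]; push_cast; ring
    rw [hnm] at hx
    exact hqm ((mul_dvd_mul_iff_left (by norm_num : (2:ℤ) ≠ 0)).mp hx)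
  have hgeom : ∑ j ∈ Finset.range m, x ^ j = 0 := by
    rw [geom_sum_eq hxne, hx1, sub_self, zero_div]
  -- expand T (e q * h)
  have hexp : T (S.e q * S.h)
      = (n : ℂ)⁻¹ * ∑ i ∈ Finset.range n, eps n ^ ((i : ℤ) * q) * T (S.g ^ i * S.h) := by
    rw [HcSetup.e, smul_mul_assoc, Finset.sum_mul, map_smul]
    congr 1
    rw [map_sum]
    refine Finset.sum_congr rfl fun i _ => ?_
    rw [smul_mul_assoc, map_smul, smul_eq_mul]
  rw [hexp]
  have hterm : ∀ i : ℕ, T (S.g ^ i * S.h) = T (S.g ^ (i % 2) * S.h) := by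
    intro i
    conv_lhs => rw [show i = 2 * (i / 2) + i % 2 by omega]
    exact trace_mod2 S T hT hn2 (i / 2) (i % 2)
  have hsum : ∑ i ∈ Finset.range n, eps n ^ ((i : ℤ) * q) * T (S.g ^ i * S.h) = 0 := by
    calc ∑ i ∈ Finset.range n, eps n ^ ((i : ℤ) * q) * T (S.g ^ i * S.h)
        = ∑ i ∈ Finset.range (2 * m), eps n ^ ((i : ℤ) * q) * T (S.g ^ (i % 2) * S.h) := by
          rw [← hn2m]; exact Finset.sum_congr rfl fun i _ => by rw [hterm i]
      _ = ∑ j ∈ Finset.range m, eps n ^ (((2 * j : ℕ) : ℤ) * q) * T (S.g ^ ((2 * j) % 2) * S.h)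
          + ∑ j ∈ Finset.range m, eps n ^ (((2 * j + 1 : ℕ) : ℤ) * q) * T (S.g ^ ((2 * j + 1) % 2) * S.h) :=
          sum_range_two_mul _ m
      _ = (∑ j ∈ Finset.range m, x ^ j) * T (S.g ^ 0 * S.h)
          + (eps n ^ q * ∑ j ∈ Finset.range m, x ^ j) * T (S.g ^ 1 * S.h) := by
          rw [Finset.sum_mul, Finset.mul_sum, Finset.sum_mul]
          congr 1
          · refine Finset.sum_congr rfl fun j _ => ?_
            have h1 : (2 * j) % 2 = 0 := by omega
            have h2 : eps n ^ (((2 * j : ℕ) : ℤ) * q) = x ^ j := by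
              rw [hxdef, ← zpow_natCast (eps n ^ (2 * q)) j, ← zpow_mul]
              congr 1
              push_cast; ring
            rw [h1, h2]
          · refine Finset.sum_congr rfl fun j _ => ?_
            have h1 : (2 * j + 1) % 2 = 1 := by omega
            have h2 : eps n ^ (((2 * j + 1 : ℕ) : ℤ) * q) = eps n ^ q * x ^ j := by
              rw [hxdef, ← zpow_natCast (eps n ^ (2 * q)) j, ← zpow_mul,
                ← zpow_add₀ heps0]
              congr 1
              push_cast; ring
            rw [h1, h2, mul_assoc]
      _ = 0 := by rw [hgeom]; ring
  rw [hsum, mul_zero]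
end
end

section
/- The polynomial 𝐏(X) = ∏_{q=0}^{n−1} (X − exp((2πi/n)(α_q − q − 1/2))) satisfies 𝐏(X) = X^n 𝐏(X⁻¹) (as an identity of rational functions, i.e., the reciprocal of each root of 𝐏 is again a root of 𝐏, with multiplicity). -/
noncomputable section

open Polynomial

/-- The polynomial `𝐏(X) = ∏_{q=0}^{n-1} (X − exp((2πi/n)(α_q − q − 1/2)))`. -/
def Pbold (n : ℕ) (α : ℤ → ℂ) : Polynomial ℂ :=
  ∏ q ∈ Finset.range n,
    (X - C (Complex.exp (2 * Real.pi * Complex.I / n * (α (q : ℤ) - (q : ℂ) - 2⁻¹))))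


section Aux

variable {n : ℕ}

lemma eps_ne_zero (n : ℕ) : eps n ≠ 0 := Complex.exp_ne_zero _

lemma eps_prim (hn : 0 < n) : IsPrimitiveRoot (eps n) n := by
  simpa [eps] using Complex.isPrimitiveRoot_exp n hn.ne'

lemma eps_zpow_n (hn : 0 < n) : eps n ^ (n : ℤ) = 1 := by
  have h := (eps_prim hn).pow_eq_one
  rw [zpow_natCast]; exact h

lemma eps_pow_sub_one_ne (hn : 0 < n) {i : ℕ} (h1 : 1 ≤ i) (h2 : i < n) :
    eps n ^ i - 1 ≠ 0 :=
  sub_ne_zero.mpr ((eps_prim hn).pow_ne_one_of_pos_of_lt (by omega) h2)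

lemma alpha_reflect (hn : 0 < n) (c : ℤ → ℂ)
    (hper : ∀ i : ℤ, c (i + n) = c i) (hsymm : ∀ i : ℤ, c (-i) = c i) (q : ℤ) :
    alphaOf n c ((n : ℤ) - 1 - q) = - alphaOf n c q := by
  unfold alphaOf
  have hζ0 : eps n ≠ 0 := eps_ne_zero n
  have hsum : (∑ i ∈ Finset.Ico 1 n,
        c (i : ℤ) * eps n ^ (-(i : ℤ) * ((n : ℤ) - 1 - q)) / (eps n ^ (i : ℕ) - 1))
      = ∑ i ∈ Finset.Ico 1 n, -(c (i : ℤ) * eps n ^ (-(i : ℤ) * q) / (eps n ^ (i : ℕ) - 1)) := by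
    refine Finset.sum_nbij' (fun i => n - i) (fun i => n - i) ?_ ?_ ?_ ?_ ?_
    · intro a ha; simp only [Finset.mem_Ico] at *; omega
    · intro a ha; simp only [Finset.mem_Ico] at *; omega
    · intro a ha; simp only [Finset.mem_Ico] at ha; omega
    · intro a ha; simp only [Finset.mem_Ico] at ha; omega
    · intro i hi
      simp only [Finset.mem_Ico] at hi
      obtain ⟨h1, h2⟩ := hi
      have hc : c (((n - i : ℕ) : ℤ)) = c i := by
        have h : ((n - i : ℕ) : ℤ) = -(i : ℤ) + n := by omega
        rw [h, hper, hsymm]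
      have hne : eps n ^ (i : ℕ) - 1 ≠ 0 := eps_pow_sub_one_ne hn h1 h2
      have hpne : eps n ^ (i : ℕ) ≠ 0 := pow_ne_zero _ hζ0
      have hcast : ((n - i : ℕ) : ℤ) = (n : ℤ) - i := by omega
      have hexp : eps n ^ (-(i : ℤ) * ((n : ℤ) - 1 - q))
          = eps n ^ (-((n - i : ℕ) : ℤ) * q) * eps n ^ (i : ℕ) := by
        rw [hcast]
        have hE : -(i : ℤ) * ((n : ℤ) - 1 - q)
            = (-((n : ℤ) - i) * q + (i : ℤ)) + (n : ℤ) * (q - (i : ℤ)) := by ring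
        rw [hE, zpow_add₀ hζ0, zpow_mul (eps n) (n : ℤ), eps_zpow_n hn, one_zpow, mul_one,
          zpow_add₀ hζ0, zpow_natCast]
      have hd : eps n ^ ((n - i : ℕ)) - 1
          = -(eps n ^ (i : ℕ))⁻¹ * (eps n ^ (i : ℕ) - 1) := by
        have h : eps n ^ ((n - i : ℕ)) = (eps n ^ (i : ℕ))⁻¹ := by
          rw [← zpow_natCast (eps n) (n - i), hcast]
          have hE : (n : ℤ) - i = -(i : ℤ) + (n : ℤ) * 1 := by ring
          rw [hE, zpow_add₀ hζ0, zpow_mul (eps n) (n : ℤ), eps_zpow_n hn, one_zpow, mul_one,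
            zpow_neg, zpow_natCast]
        rw [h]; field_simp; ring
      rw [hc, hexp, hd]
      field_simp
  rw [hsum, Finset.sum_neg_distrib]
  ring

lemma alpha_sum_zero (hn : 0 < n) (c : ℤ → ℂ)
    (hper : ∀ i : ℤ, c (i + n) = c i) (hsymm : ∀ i : ℤ, c (-i) = c i) :
    ∑ q ∈ Finset.range n, alphaOf n c (q : ℤ) = 0 := by
  have h := Finset.sum_range_reflect (fun q : ℕ => alphaOf n c (q : ℤ)) n
  have h2 : ∀ q ∈ Finset.range n, alphaOf n c (((n - 1 - q : ℕ)) : ℤ)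
      = -(alphaOf n c (q : ℤ)) := by
    intro q hq
    simp only [Finset.mem_Ico, Finset.mem_range] at hq
    rw [show (((n - 1 - q : ℕ)) : ℤ) = (n : ℤ) - 1 - q by omega]
    exact alpha_reflect hn c hper hsymm q
  rw [Finset.sum_congr rfl h2, Finset.sum_neg_distrib] at h
  have h3 : (2 : ℂ) * ∑ q ∈ Finset.range n, alphaOf n c (q : ℤ) = 0 := by
    linear_combination -h
  exact (mul_eq_zero.mp h3).resolve_left two_ne_zero

lemma root_pair (hn : 0 < n) (c : ℤ → ℂ)
    (hper : ∀ i : ℤ, c (i + n) = c i) (hsymm : ∀ i : ℤ, c (-i) = c i)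
    {q : ℕ} (hq : q < n) :
    Complex.exp (2 * Real.pi * Complex.I / n * (alphaOf n c (q : ℤ) - (q : ℂ) - 2⁻¹)) *
      Complex.exp (2 * Real.pi * Complex.I / n *
        (alphaOf n c ((n - 1 - q : ℕ) : ℤ) - ((n - 1 - q : ℕ) : ℂ) - 2⁻¹)) = 1 := by
  have hne : (n : ℂ) ≠ 0 := Nat.cast_ne_zero.mpr hn.ne'
  rw [← Complex.exp_add]
  rw [show (((n - 1 - q : ℕ)) : ℤ) = (n : ℤ) - 1 - q by omega,
    alpha_reflect hn c hper hsymm]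
  have h2 : ((n - 1 - q : ℕ) : ℂ) = (n : ℂ) - 1 - q := by
    have h3 : (n - 1 - q : ℕ) + q + 1 = n := by omega
    have h4 := congrArg (Nat.cast : ℕ → ℂ) h3
    push_cast at h4
    linear_combination h4
  rw [h2]
  have h5 : 2 * Real.pi * Complex.I / n * (alphaOf n c (q : ℤ) - (q : ℂ) - 2⁻¹) +
      2 * Real.pi * Complex.I / n *
        (-(alphaOf n c (q : ℤ)) - ((n : ℂ) - 1 - q) - 2⁻¹)
      = -(2 * Real.pi * Complex.I) := by
    field_simp
    ring
  rw [h5, Complex.exp_neg, Complex.exp_two_pi_mul_I, inv_one]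

lemma root_prod (hn : 0 < n) (he : Even n) (c : ℤ → ℂ)
    (hper : ∀ i : ℤ, c (i + n) = c i) (hsymm : ∀ i : ℤ, c (-i) = c i) :
    ∏ q ∈ Finset.range n,
      Complex.exp (2 * Real.pi * Complex.I / n * (alphaOf n c (q : ℤ) - (q : ℂ) - 2⁻¹))
      = 1 := by
  have hne : (n : ℂ) ≠ 0 := Nat.cast_ne_zero.mpr hn.ne'
  rw [← Complex.exp_sum]
  have hG : (∑ q ∈ Finset.range n, (q : ℂ)) * 2 = (n : ℂ) * ((n : ℂ) - 1) := by
    have h := congrArg (Nat.cast : ℕ → ℂ) (Finset.sum_range_id_mul_two n)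
    push_cast [Nat.cast_sub hn] at h
    exact h
  have hS : ∑ q ∈ Finset.range n,
      (2 * Real.pi * Complex.I / n * (alphaOf n c (q : ℤ) - (q : ℂ) - 2⁻¹))
      = (n : ℂ) * (-(Real.pi * Complex.I)) := by
    rw [← Finset.mul_sum]
    have hsig : ∑ q ∈ Finset.range n, (alphaOf n c (q : ℤ) - (q : ℂ) - 2⁻¹)
        = (∑ q ∈ Finset.range n, alphaOf n c (q : ℤ))
          - (∑ q ∈ Finset.range n, (q : ℂ)) - (n : ℂ) * 2⁻¹ := by
      rw [Finset.sum_sub_distrib, Finset.sum_sub_distrib, Finset.sum_const,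
        Finset.card_range, nsmul_eq_mul]
    rw [hsig, alpha_sum_zero hn c hper hsymm]
    field_simp
    linear_combination (-1 : ℂ) * hG
  rw [hS, Complex.exp_nat_mul, Complex.exp_neg, Complex.exp_pi_mul_I]
  simp [he.neg_one_pow]

end Aux

/-- `𝐏(X) = X^n 𝐏(X⁻¹)` as an identity of rational functions. -/
theorem statement6 (n : ℕ) (hn : 0 < n) (he : Even n) (c : ℤ → ℂ)
    (hper : ∀ i : ℤ, c (i + n) = c i) (hsymm : ∀ i : ℤ, c (-i) = c i) (hc0 : c 0 ≠ 0) :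
    ∀ z : ℂ, z ≠ 0 →
      (Pbold n (alphaOf n c)).eval z = z ^ n * (Pbold n (alphaOf n c)).eval z⁻¹ := by
  intro z hz
  set F : ℕ → ℂ := fun q =>
    Complex.exp (2 * Real.pi * Complex.I / n * (alphaOf n c (q : ℤ) - (q : ℂ) - 2⁻¹)) with hF
  have hev : ∀ w : ℂ, (Pbold n (alphaOf n c)).eval w = ∏ q ∈ Finset.range n, (w - F q) := by
    intro w
    simp [Pbold, eval_prod, hF]
  rw [hev, hev]
  have hF0 : ∀ q, F q ≠ 0 := fun q => Complex.exp_ne_zero _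
  have hinv : ∀ q ∈ Finset.range n, (F q)⁻¹ = F (n - 1 - q) := by
    intro q hq
    simp only [Finset.mem_range] at hq
    exact inv_eq_of_mul_eq_one_right (root_pair hn c hper hsymm hq)
  calc ∏ q ∈ Finset.range n, (z - F q)
      = ∏ q ∈ Finset.range n, (z - F (n - 1 - q)) :=
        (Finset.prod_range_reflect (fun q => z - F q) n).symm
    _ = ∏ q ∈ Finset.range n, (-(F q)⁻¹ * (1 - z * F q)) := by
        refine Finset.prod_congr rfl fun q hq => ?_
        rw [← hinv q hq,
          show -(F q)⁻¹ * (1 - z * F q) = z * (F q * (F q)⁻¹) - (F q)⁻¹ from by ring,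
          mul_inv_cancel₀ (hF0 q), mul_one]
    _ = (∏ q ∈ Finset.range n, -(F q)⁻¹) * ∏ q ∈ Finset.range n, (1 - z * F q) :=
        Finset.prod_mul_distrib
    _ = ∏ q ∈ Finset.range n, (1 - z * F q) := by
        have h1 : (∏ q ∈ Finset.range n, -(F q)⁻¹)
            = (-1 : ℂ) ^ n * (∏ q ∈ Finset.range n, F q)⁻¹ := by
          rw [← Finset.prod_inv_distrib,
            show (-1 : ℂ) ^ n = ∏ _q ∈ Finset.range n, (-1 : ℂ) by
              rw [Finset.prod_const, Finset.card_range],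
            ← Finset.prod_mul_distrib]
          exact Finset.prod_congr rfl fun q _ => by ring
        rw [h1, root_prod hn he c hper hsymm, he.neg_one_pow, inv_one, mul_one, one_mul]
    _ = ∏ q ∈ Finset.range n, (z * (z⁻¹ - F q)) := by
        refine Finset.prod_congr rfl fun q hq => ?_
        field_simp
    _ = z ^ n * ∏ q ∈ Finset.range n, (z⁻¹ - F q) := by
        rw [Finset.prod_mul_distrib, Finset.prod_const, Finset.card_range]
end
end
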